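/- Let m ≥ 1 and let A, B, C be m×m matrices over F₂ such that the digital net generated by (A, B, C) is a (0,m,3)-net over F₂. Let a_i, b_i, c_i denote the i-th rows of A, B, C respectively, and for integers i, j ≥ 0 with i+j ≤ m−1 let V_{i,j} be the F₂-subspace of F₂^m spanned by a_1,…,a_i, b_1,…,b_{m−i−j−1}, c_1,…,c_j. Then for every 0 ≤ j ≤ m−1, the coset c_{j+1} + span{c_1,…,c_j} equals the set ⋂_{i=0}^{m−j−1} (F₂^m \ V_{i,j}). -/

import Mathlib

open Matrix

/-- The vector of binary digits of `l` (least significant first). -/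
def digitsVec (m l : ℕ) : Fin m → ZMod 2 := fun k => if l.testBit k.val then 1 else 0

/-- The map φ sending a bit vector to a real number in [0,1). -/
noncomputable def phiMap (m : ℕ) (y : Fin m → ZMod 2) : ℝ :=
  ∑ k : Fin m, ((y k).val : ℝ) / 2 ^ (k.val + 1)

/-- The digital net (as a multiset of `2^m` points in `[0,1)^s`) generated by
matrices `C 0, …, C (s-1)`. -/
noncomputable def digitalNet (m s : ℕ) (C : Fin s → Matrix (Fin m) (Fin m) (ZMod 2)) :
    Multiset (Fin s → ℝ) :=
  (Multiset.range (2 ^ m)).map fun l => fun j => phiMap m ((C j).mulVec (digitsVec m l))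

open Classical in
/-- `P` is a `(t,m,s)`-net over `F₂`: every elementary interval of volume `2^{t-m}`
contains exactly `2^t` points of `P`, counted with multiplicity. -/
def IsNet (t m s : ℕ) (P : Multiset (Fin s → ℝ)) : Prop :=
  ∀ d : Fin s → ℕ, (∑ i, d i) = m - t →
    ∀ a : Fin s → ℕ, (∀ i, a i < 2 ^ d i) →
      (P.countP fun x => ∀ i,
        ((a i : ℝ) / 2 ^ d i ≤ x i ∧ x i < ((a i : ℝ) + 1) / 2 ^ d i)) = 2 ^ t

/-- The anti-diagonal matrix `J_m` over `F₂`. -/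
def Jmat (m : ℕ) : Matrix (Fin m) (Fin m) (ZMod 2) :=
  Matrix.of fun i j => if i.val + j.val = m - 1 then 1 else 0

/-- The upper-triangular Pascal matrix `P_m` over `F₂` (0-indexed entry `(i,j)` is
`binom(j,i) mod 2`). -/
def Pmat (m : ℕ) : Matrix (Fin m) (Fin m) (ZMod 2) :=
  Matrix.of fun i j => ((j.val.choose i.val : ℕ) : ZMod 2)

/-- A matrix is lower triangular. -/
def IsLowerTri {m : ℕ} (L : Matrix (Fin m) (Fin m) (ZMod 2)) : Prop :=
  ∀ i j : Fin m, i < j → L i j = 0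

/-- The set consisting of the first `n` rows of `M`. -/
def rowSet {m : ℕ} (M : Matrix (Fin m) (Fin m) (ZMod 2)) (n : ℕ) :
    Set (Fin m → ZMod 2) :=
  {x | ∃ r : Fin m, r.val < n ∧ x = M r}

/-- The subspace `V_{i,j}` spanned by the first `i` rows of `A`, the first
`m−i−j−1` rows of `B` and the first `j` rows of `C`. -/
def Vsub {m : ℕ} (A B C : Matrix (Fin m) (Fin m) (ZMod 2)) (i j : ℕ) :
    Submodule (ZMod 2) (Fin m → ZMod 2) :=
  Submodule.span (ZMod 2) (rowSet A i ∪ rowSet B (m - i - j - 1) ∪ rowSet C j)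


/-! ### Auxiliary lemmas -/

/-- Extended bit function. -/
def Yfun (m : ℕ) (y : Fin m → ZMod 2) : ℕ → ℕ :=
  fun i => if h : i < m then (y ⟨i, h⟩).val else 0

/-- Nat value of a bit vector (most significant bit = `y 0`). -/
def Nval (m : ℕ) (y : Fin m → ZMod 2) : ℕ :=
  ∑ i ∈ Finset.range m, Yfun m y (m - 1 - i) * 2 ^ i

lemma Yfun_le_one (m : ℕ) (y : Fin m → ZMod 2) (i : ℕ) : Yfun m y i ≤ 1 := by
  unfold Yfun; split
  · have := ZMod.val_lt (y ⟨i, by assumption⟩); omega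
  · omega

lemma sum_bits_lt (n : ℕ) (g : ℕ → ℕ) (hg : ∀ i, g i ≤ 1) :
    ∑ i ∈ Finset.range n, g i * 2 ^ i < 2 ^ n := by
  induction n with
  | zero => simp
  | succ n ih =>
    rw [Finset.sum_range_succ, pow_succ]
    have h1 := hg n
    have h2 : g n * 2 ^ n ≤ 2 ^ n := by
      calc g n * 2 ^ n ≤ 1 * 2 ^ n := Nat.mul_le_mul_right _ h1
        _ = 2 ^ n := one_mul _
    omega

lemma Nval_lt (m : ℕ) (y : Fin m → ZMod 2) : Nval m y < 2 ^ m :=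
  sum_bits_lt m _ fun i => Yfun_le_one m y _

lemma zmod2_eq_one {z : ZMod 2} (h : z ≠ 0) : z = 1 := by revert z; decide

lemma zmod2_eq_zero {z : ZMod 2} (h : z ≠ 1) : z = 0 := by revert z; decide

lemma F1 (m : ℕ) (y : Fin m → ZMod 2) (k : Fin m) (hk : y k = 1) :
    2 ^ (m - 1 - k.val) ≤ Nval m y := by
  have hkm := k.isLt
  have hmem : m - 1 - k.val ∈ Finset.range m := by rw [Finset.mem_range]; omega
  have h := Finset.single_le_sum (f := fun i => Yfun m y (m - 1 - i) * 2 ^ i)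
    (fun i _ => Nat.zero_le _) hmem
  have he : m - 1 - (m - 1 - k.val) = k.val := by omega
  rw [he] at h
  have hy : Yfun m y k.val = 1 := by
    unfold Yfun; rw [dif_pos hkm]
    simp only [Fin.eta]
    rw [hk]; rfl
  rw [hy, one_mul] at h
  exact h

lemma F2 (m : ℕ) (y : Fin m → ZMod 2) (k k' : Fin m) (hne : k ≠ k')
    (h1 : y k = 1) (h2 : y k' = 1) :
    2 ^ (m - 1 - k.val) + 2 ^ (m - 1 - k'.val) ≤ Nval m y := by
  have hkm := k.isLt; have hkm' := k'.isLt
  have hvne : k.val ≠ k'.val := fun h => hne (Fin.ext h)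
  have hd : m - 1 - k.val ≠ m - 1 - k'.val := by omega
  have hsub : ({m - 1 - k.val, m - 1 - k'.val} : Finset ℕ) ⊆ Finset.range m := by
    intro x hx; simp at hx; rw [Finset.mem_range]; omega
  have h := Finset.sum_le_sum_of_subset (f := fun i => Yfun m y (m - 1 - i) * 2 ^ i) hsub
  rw [Finset.sum_pair hd] at h
  have he : m - 1 - (m - 1 - k.val) = k.val := by omega
  have he' : m - 1 - (m - 1 - k'.val) = k'.val := by omega
  simp only [he, he'] at h
  have hy : Yfun m y k.val = 1 := by
    unfold Yfun; rw [dif_pos hkm]; simp only [Fin.eta]; rw [h1]; rfl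
  have hy' : Yfun m y k'.val = 1 := by
    unfold Yfun; rw [dif_pos hkm']; simp only [Fin.eta]; rw [h2]; rfl
  rw [hy, hy', one_mul, one_mul] at h
  exact h

lemma F3 (m : ℕ) (y : Fin m → ZMod 2) (r : ℕ) (hr : r < m)
    (h0 : ∀ k : Fin m, k.val ≤ r → y k = 0) : Nval m y < 2 ^ (m - 1 - r) := by
  have heq : Nval m y = ∑ i ∈ Finset.range (m - 1 - r), Yfun m y (m - 1 - i) * 2 ^ i := by
    unfold Nval
    refine (Finset.sum_subset (Finset.range_subset_range.2 (by omega)) ?_).symm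
    intro i hi hni
    rw [Finset.mem_range] at hi; rw [Finset.mem_range] at hni
    have hlt : m - 1 - i < m := by omega
    have : y ⟨m - 1 - i, hlt⟩ = 0 := h0 _ (by simp; omega)
    unfold Yfun; rw [dif_pos hlt, this]
    simp
  rw [heq]
  exact sum_bits_lt _ _ fun i => Yfun_le_one m y _

lemma phi_eq (m : ℕ) (y : Fin m → ZMod 2) :
    phiMap m y = (Nval m y : ℝ) / 2 ^ m := by
  unfold phiMap Nval
  push_cast
  rw [Finset.sum_div, ← Finset.sum_range_reflect]
  calc ∑ k : Fin m, ((y k).val : ℝ) / 2 ^ (k.val + 1)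
      = ∑ i ∈ Finset.range m, (Yfun m y i : ℝ) / 2 ^ (i + 1) := by
        rw [← Fin.sum_univ_eq_sum_range (fun i => ((Yfun m y i : ℝ)) / 2 ^ (i + 1)) m]
        apply Finset.sum_congr rfl
        intro k _
        congr 2
        unfold Yfun
        rw [dif_pos k.isLt]
    _ = ∑ i ∈ Finset.range m, (Yfun m y (m - 1 - (m - 1 - i)) : ℝ) * 2 ^ (m - 1 - i) / 2 ^ m := by
        apply Finset.sum_congr rfl
        intro i hi
        rw [Finset.mem_range] at hi
        have he : m - 1 - (m - 1 - i) = i := by omega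
        rw [he]
        have h2 : (2:ℝ) ^ m = 2 ^ (m - 1 - i) * 2 ^ (i + 1) := by
          rw [← pow_add]; congr 1; omega
        rw [h2, mul_comm ((Yfun m y i : ℝ)) _, mul_div_mul_left _ _ (by positivity)]

lemma nat_bounds (m : ℕ) (y : Fin m → ZMod 2) (d a : ℕ) (hd : d ≤ m)
    (h1 : (a : ℝ) / 2 ^ d ≤ phiMap m y) (h2 : phiMap m y < ((a : ℝ) + 1) / 2 ^ d) :
    a * 2 ^ (m - d) ≤ Nval m y ∧ Nval m y < (a + 1) * 2 ^ (m - d) := by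
  rw [phi_eq] at h1 h2
  have h2d : (0:ℝ) < 2 ^ d := by positivity
  have h2m : (0:ℝ) < 2 ^ m := by positivity
  have hmd : 2 ^ (m - d) * 2 ^ d = 2 ^ m := by rw [← pow_add]; congr 1; omega
  constructor
  · have hh := (div_le_div_iff₀ h2d h2m).mp h1
    have hc : a * 2 ^ m ≤ Nval m y * 2 ^ d := by exact_mod_cast hh
    rw [← hmd, ← mul_assoc] at hc
    exact Nat.le_of_mul_le_mul_right hc (by positivity)
  · have hh := (div_lt_div_iff₀ h2m h2d).mp h2
    have hc : Nval m y * 2 ^ d < (a + 1) * 2 ^ m := by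
      have : ((Nval m y : ℝ)) * 2 ^ d < ((a:ℝ) + 1) * 2 ^ m := hh
      exact_mod_cast this
    rw [← hmd, ← mul_assoc] at hc
    exact Nat.lt_of_mul_lt_mul_right hc

lemma bits_of_lt (m : ℕ) (y : Fin m → ZMod 2) (d : ℕ) (hd : d ≤ m)
    (hN : Nval m y < 2 ^ (m - d)) : ∀ k : Fin m, k.val < d → y k = 0 := by
  intro k hk
  by_contra h
  have hy := zmod2_eq_one h
  have hF := F1 m y k hy
  have : (2:ℕ) ^ (m - d) ≤ 2 ^ (m - 1 - k.val) := Nat.pow_le_pow_right (by norm_num) (by omega)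
  omega

lemma bits_of_one (m : ℕ) (y : Fin m → ZMod 2) (d r : ℕ) (hd : d ≤ m) (hr : r < d)
    (hlow : 2 ^ (m - 1 - r) ≤ Nval m y) (hhigh : Nval m y < 2 ^ (m - 1 - r) + 2 ^ (m - d)) :
    ∀ k : Fin m, k.val < d → y k = if k.val = r then 1 else 0 := by
  have hrm : r < m := by omega
  have hi : ∀ k : Fin m, k.val < r → y k = 0 := by
    intro k hk
    by_contra h
    have hy := zmod2_eq_one h
    have hF := F1 m y k hy
    have h1 : (2:ℕ) ^ (m - r) ≤ 2 ^ (m - 1 - k.val) := Nat.pow_le_pow_right (by norm_num) (by omega)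
    have h2 : (2:ℕ) ^ (m - 1 - r) + 2 ^ (m - d) ≤ 2 ^ (m - r) := by
      have e : m - r = (m - 1 - r) + 1 := by omega
      rw [e, pow_succ]
      have : (2:ℕ) ^ (m - d) ≤ 2 ^ (m - 1 - r) := Nat.pow_le_pow_right (by norm_num) (by omega)
      omega
    omega
  have hrr : y ⟨r, hrm⟩ = 1 := by
    by_contra h
    have h0 : ∀ k : Fin m, k.val ≤ r → y k = 0 := by
      intro k hk
      rcases Nat.lt_or_ge k.val r with hlt | hge
      · exact hi k hlt
      · have : k = ⟨r, hrm⟩ := Fin.ext (show k.val = r by omega)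
        rw [this]; exact zmod2_eq_zero h
    have := F3 m y r hrm h0
    omega
  intro k hk
  split_ifs with he
  · have : k = ⟨r, hrm⟩ := Fin.ext he
    rw [this]; exact hrr
  · by_contra h
    have hy := zmod2_eq_one h
    have hne : k ≠ ⟨r, hrm⟩ := by intro hh; exact he (by rw [hh])
    have hF := F2 m y k ⟨r, hrm⟩ hne hy hrr
    simp only [show ((⟨r, hrm⟩ : Fin m)).val = r from rfl] at hF
    have : (2:ℕ) ^ (m - d) ≤ 2 ^ (m - 1 - k.val) := Nat.pow_le_pow_right (by norm_num) (by omega)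
    omega

/-- Point of the digital net hitting a given one-bit (or zero) target pattern. -/
lemma net_bits (m : ℕ) (A B C : Matrix (Fin m) (Fin m) (ZMod 2))
    (hnet : IsNet 0 m 3 (digitalNet m 3 ![A, B, C]))
    (d : Fin 3 → ℕ) (hsum : d 0 + d 1 + d 2 = m) (jb : Fin 3) (r : ℕ) (hr : r < d jb) :
    ∃ x : Fin m → ZMod 2, ∀ i : Fin 3, ∀ k : Fin m, k.val < d i →
      (![A, B, C] i).mulVec x k = if i = jb ∧ k.val = r then 1 else 0 := by
  have hdle : ∀ i, d i ≤ m := by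
    intro i
    fin_cases i
    · show d 0 ≤ m; omega
    · show d 1 ≤ m; omega
    · show d 2 ≤ m; omega
  set a : Fin 3 → ℕ := fun i => if i = jb then 2 ^ (d jb - 1 - r) else 0 with ha
  have hbound : ∀ i, a i < 2 ^ d i := by
    intro i
    simp only [ha]
    split_ifs with h
    · subst h; exact Nat.pow_lt_pow_right (by norm_num) (by omega)
    · positivity
  have hsum' : (∑ i, d i) = m - 0 := by rw [Fin.sum_univ_three]; omega
  have hcount := hnet d hsum' a hbound
  have hpos : 0 < (digitalNet m 3 ![A, B, C]).countP fun x => ∀ i,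
      ((a i : ℝ) / 2 ^ d i ≤ x i ∧ x i < ((a i : ℝ) + 1) / 2 ^ d i) := by
    rw [hcount]; norm_num
  obtain ⟨p, hpmem, hp⟩ := Multiset.countP_pos.mp hpos
  rw [digitalNet, Multiset.mem_map] at hpmem
  obtain ⟨l, hl, rfl⟩ := hpmem
  refine ⟨digitsVec m l, ?_⟩
  intro i k hk
  have hpi := hp i
  set y : Fin m → ZMod 2 := (![A, B, C] i).mulVec (digitsVec m l) with hy
  have hnb := nat_bounds m y (d i) (a i) (hdle i) hpi.1 hpi.2
  by_cases hij : i = jb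
  · subst hij
    simp only [ha, if_pos rfl] at hnb
    have he1 : 2 ^ (d i - 1 - r) * 2 ^ (m - d i) = 2 ^ (m - 1 - r) := by
      have hgoal := hdle i
      have he : d i - 1 - r + (m - d i) = m - 1 - r := by clear * - hgoal hr; omega
      rw [← pow_add, he]
    have he2 : (2 ^ (d i - 1 - r) + 1) * 2 ^ (m - d i) = 2 ^ (m - 1 - r) + 2 ^ (m - d i) := by
      rw [add_mul, one_mul, he1]
    rw [he1] at hnb
    rw [he2] at hnb
    have := bits_of_one m y (d i) r (hdle i) hr hnb.1 hnb.2 k hk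
    rw [this]
    simp
  · simp only [ha, if_neg hij] at hnb
    have hnb2 : Nval m y < 2 ^ (m - d i) := by have h2 := hnb.2; clear * - h2; omega
    have := bits_of_lt m y (d i) (hdle i) hnb2 k hk
    rw [this]
    simp [hij]

/-- The stacked family of rows: first `d1` rows of `A`, then `d2` rows of `B`,
then the rest from `C`. -/
def fam (m d1 d2 : ℕ) (A B C : Matrix (Fin m) (Fin m) (ZMod 2)) :
    Fin m → (Fin m → ZMod 2) := fun k =>
  if k.val < d1 then A k
  else if k.val < d1 + d2 then B ⟨k.val - d1, lt_of_le_of_lt (Nat.sub_le _ _) k.isLt⟩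
  else C ⟨k.val - d1 - d2, lt_of_le_of_lt (le_trans (Nat.sub_le _ _) (Nat.sub_le _ _)) k.isLt⟩

lemma master (m : ℕ) (A B C : Matrix (Fin m) (Fin m) (ZMod 2))
    (hnet : IsNet 0 m 3 (digitalNet m 3 ![A, B, C]))
    (d1 d2 d3 : ℕ) (hsum : d1 + d2 + d3 = m) :
    LinearIndependent (ZMod 2) (fam m d1 d2 A B C) := by
  have hsurj : ∀ k0 : Fin m, ∃ x : Fin m → ZMod 2,
      ∀ k : Fin m, fam m d1 d2 A B C k ⬝ᵥ x = if k = k0 then 1 else 0 := by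
    intro k0
    have hsum3 : (![d1, d2, d3] : Fin 3 → ℕ) 0 + ![d1, d2, d3] 1 + ![d1, d2, d3] 2 = m := by
      simpa using hsum
    have hk0 := k0.isLt
    obtain ⟨jb, r, hrd, hkval⟩ : ∃ (jb : Fin 3) (r : ℕ), r < (![d1, d2, d3] : Fin 3 → ℕ) jb ∧
        ((jb = 0 ∧ r < d1 ∧ k0.val = r) ∨ (jb = 1 ∧ r < d2 ∧ k0.val = d1 + r) ∨
         (jb = 2 ∧ r < d3 ∧ k0.val = d1 + d2 + r)) := by
      rcases Nat.lt_or_ge k0.val d1 with h | h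
      · exact ⟨0, k0.val, by simpa using h, Or.inl ⟨rfl, h, rfl⟩⟩
      · rcases Nat.lt_or_ge k0.val (d1 + d2) with h' | h'
        · exact ⟨1, k0.val - d1, by simp; omega, Or.inr (Or.inl ⟨rfl, by omega, by omega⟩)⟩
        · exact ⟨2, k0.val - d1 - d2, by simp; omega, Or.inr (Or.inr ⟨rfl, by omega, by omega⟩)⟩
    obtain ⟨x, hx⟩ := net_bits m A B C hnet ![d1, d2, d3] hsum3 jb r hrd
    refine ⟨x, ?_⟩
    intro k
    have hkm := k.isLt
    unfold fam
    by_cases h1 : k.val < d1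
    · rw [if_pos h1]
      have hthis : A k ⬝ᵥ x = if (0 : Fin 3) = jb ∧ k.val = r then 1 else 0 :=
        hx 0 k (by simpa using h1)
      rw [hthis]
      refine if_congr ?_ rfl rfl
      constructor
      · rintro ⟨hjb, hkr⟩
        rcases hkval with ⟨hj0, hr1, hk0⟩ | ⟨hj1, hr1, hk0⟩ | ⟨hj2, hr1, hk0⟩
        · exact Fin.ext (by omega)
        · rw [← hjb] at hj1; exact absurd hj1 (by decide)
        · rw [← hjb] at hj2; exact absurd hj2 (by decide)
      · rintro rfl
        rcases hkval with ⟨hj0, hr1, hk0⟩ | ⟨hj1, hr1, hk0⟩ | ⟨hj2, hr1, hk0⟩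
        · exact ⟨hj0.symm, hk0⟩
        · omega
        · omega
    · by_cases h2 : k.val < d1 + d2
      · rw [if_neg h1, if_pos h2]
        have hthis : B ⟨k.val - d1, lt_of_le_of_lt (Nat.sub_le _ _) k.isLt⟩ ⬝ᵥ x
            = if (1 : Fin 3) = jb ∧ k.val - d1 = r then 1 else 0 :=
          hx 1 ⟨k.val - d1, lt_of_le_of_lt (Nat.sub_le _ _) k.isLt⟩ (by simp; omega)
        rw [hthis]
        refine if_congr ?_ rfl rfl
        constructor
        · rintro ⟨hjb, hkr⟩
          rcases hkval with ⟨hj0, hr1, hk0⟩ | ⟨hj1, hr1, hk0⟩ | ⟨hj2, hr1, hk0⟩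
          · rw [← hjb] at hj0; exact absurd hj0 (by decide)
          · exact Fin.ext (by omega)
          · rw [← hjb] at hj2; exact absurd hj2 (by decide)
        · rintro rfl
          rcases hkval with ⟨hj0, hr1, hk0⟩ | ⟨hj1, hr1, hk0⟩ | ⟨hj2, hr1, hk0⟩
          · omega
          · exact ⟨hj1.symm, by omega⟩
          · omega
      · rw [if_neg h1, if_neg h2]
        have hthis : C ⟨k.val - d1 - d2,
              lt_of_le_of_lt (le_trans (Nat.sub_le _ _) (Nat.sub_le _ _)) k.isLt⟩ ⬝ᵥ x
            = if (2 : Fin 3) = jb ∧ k.val - d1 - d2 = r then 1 else 0 :=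
          hx 2 ⟨k.val - d1 - d2, lt_of_le_of_lt (le_trans (Nat.sub_le _ _) (Nat.sub_le _ _)) k.isLt⟩
            (by simp; omega)
        rw [hthis]
        refine if_congr ?_ rfl rfl
        constructor
        · rintro ⟨hjb, hkr⟩
          rcases hkval with ⟨hj0, hr1, hk0⟩ | ⟨hj1, hr1, hk0⟩ | ⟨hj2, hr1, hk0⟩
          · rw [← hjb] at hj0; exact absurd hj0 (by decide)
          · rw [← hjb] at hj1; exact absurd hj1 (by decide)
          · exact Fin.ext (by omega)
        · rintro rfl
          rcases hkval with ⟨hj0, hr1, hk0⟩ | ⟨hj1, hr1, hk0⟩ | ⟨hj2, hr1, hk0⟩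
          · omega
          · omega
          · exact ⟨hj2.symm, by omega⟩
  rw [Fintype.linearIndependent_iff]
  intro g hg k0
  obtain ⟨x, hx⟩ := hsurj k0
  have key : (∑ k, g k • fam m d1 d2 A B C k) ⬝ᵥ x
      = ∑ k, g k * (fam m d1 d2 A B C k ⬝ᵥ x) := by
    simp only [dotProduct, Finset.sum_apply, Pi.smul_apply, smul_eq_mul, Finset.sum_mul,
      Finset.mul_sum]
    rw [Finset.sum_comm]
    simp [mul_assoc]
  rw [hg] at key
  simp only [hx, mul_ite, mul_one, mul_zero] at key
  rw [Finset.sum_ite_eq' Finset.univ k0 g] at key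
  simp only [Finset.mem_univ, if_true] at key
  have : (0 : Fin m → ZMod 2) ⬝ᵥ x = 0 := by simp [dotProduct]
  rw [this] at key
  exact key.symm

/-- Index subset selecting first `e1` rows of `A`-block, `e2` of `B`-block, `e3` of `C`-block. -/
def sSet (m d1 d2 e1 e2 e3 : ℕ) : Set (Fin m) :=
  {k | k.val < e1 ∨ (d1 ≤ k.val ∧ k.val < d1 + e2) ∨
    (d1 + d2 ≤ k.val ∧ k.val < d1 + d2 + e3)}

lemma famSet (m d1 d2 d3 e1 e2 e3 : ℕ) (A B C : Matrix (Fin m) (Fin m) (ZMod 2))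
    (hsum : d1 + d2 + d3 = m) (he1 : e1 ≤ d1) (he2 : e2 ≤ d2) (he3 : e3 ≤ d3) :
    fam m d1 d2 A B C '' sSet m d1 d2 e1 e2 e3 = rowSet A e1 ∪ rowSet B e2 ∪ rowSet C e3 := by
  ext x
  constructor
  · rintro ⟨k, hk, rfl⟩
    rcases hk with h | ⟨h, h'⟩ | ⟨h, h'⟩
    · left; left
      refine ⟨k, h, ?_⟩
      unfold fam; rw [if_pos (by omega)]
    · left; right
      refine ⟨⟨k.val - d1, lt_of_le_of_lt (Nat.sub_le _ _) k.isLt⟩, show k.val - d1 < e2 by omega, ?_⟩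
      unfold fam; rw [if_neg (by omega), if_pos (by omega)]
    · right
      refine ⟨⟨k.val - d1 - d2, lt_of_le_of_lt (le_trans (Nat.sub_le _ _) (Nat.sub_le _ _)) k.isLt⟩,
        show k.val - d1 - d2 < e3 by omega, ?_⟩
      unfold fam; rw [if_neg (by omega), if_neg (by omega)]
  · rintro ((⟨r, hr, rfl⟩ | ⟨r, hr, rfl⟩) | ⟨r, hr, rfl⟩)
    · refine ⟨r, Or.inl hr, ?_⟩
      unfold fam; rw [if_pos (by omega)]
    · have hrm := r.isLt
      refine ⟨⟨d1 + r.val, by omega⟩, Or.inr (Or.inl ⟨show d1 ≤ d1 + r.val by omega,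
        show d1 + r.val < d1 + e2 by omega⟩), ?_⟩
      unfold fam
      rw [if_neg (show ¬ d1 + r.val < d1 by omega), if_pos (show d1 + r.val < d1 + d2 by omega)]
      apply congrArg
      apply Fin.ext
      show d1 + r.val - d1 = r.val
      omega
    · have hrm := r.isLt
      refine ⟨⟨d1 + d2 + r.val, by omega⟩, Or.inr (Or.inr ⟨show d1 + d2 ≤ d1 + d2 + r.val by omega,
        show d1 + d2 + r.val < d1 + d2 + e3 by omega⟩), ?_⟩
      unfold fam
      rw [if_neg (show ¬ d1 + d2 + r.val < d1 by omega),
        if_neg (show ¬ d1 + d2 + r.val < d1 + d2 by omega)]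
      apply congrArg
      apply Fin.ext
      show d1 + d2 + r.val - d1 - d2 = r.val
      omega

lemma rowSet_zero {m : ℕ} (M : Matrix (Fin m) (Fin m) (ZMod 2)) : rowSet M 0 = ∅ := by
  ext x; simp [rowSet]

lemma span_inter {m : ℕ} (f : Fin m → (Fin m → ZMod 2))
    (hf : LinearIndependent (ZMod 2) f) (s t : Set (Fin m)) (x : Fin m → ZMod 2)
    (hs : x ∈ Submodule.span (ZMod 2) (f '' s)) (ht : x ∈ Submodule.span (ZMod 2) (f '' t)) :
    x ∈ Submodule.span (ZMod 2) (f '' (s ∩ t)) := by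
  have hsplit : s = (s ∩ t) ∪ (s \ t) := (Set.inter_union_diff s t).symm
  rw [hsplit, Set.image_union, Submodule.span_union, Submodule.mem_sup] at hs
  obtain ⟨x1, hx1, x2, hx2, rfl⟩ := hs
  have hx2t : x2 ∈ Submodule.span (ZMod 2) (f '' t) := by
    have hx1t : x1 ∈ Submodule.span (ZMod 2) (f '' t) :=
      Submodule.span_mono (Set.image_mono (Set.inter_subset_right)) hx1
    have := Submodule.sub_mem _ ht hx1t
    simpa using this
  have hdisj : Disjoint (Submodule.span (ZMod 2) (f '' (s \ t)))
      (Submodule.span (ZMod 2) (f '' t)) :=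
    hf.disjoint_span_image (Set.disjoint_sdiff_left)
  have hx20 : x2 = 0 := by
    have := hdisj.le_bot ⟨hx2, hx2t⟩
    simpa using this
  rw [hx20, add_zero]
  exact hx1

lemma mem_coset {m : ℕ} (f : Fin m → (Fin m → ZMod 2))
    (hf : LinearIndependent (ZMod 2) f)
    (hspan : Submodule.span (ZMod 2) (Set.range f) = ⊤)
    (s : Set (Fin m)) (kstar : Fin m) (huniv : (Set.univ : Set (Fin m)) = insert kstar s)
    (v : Fin m → ZMod 2) (hv : v ∉ Submodule.span (ZMod 2) (f '' s)) :
    v + f kstar ∈ Submodule.span (ZMod 2) (f '' s) := by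
  have hv_top : v ∈ Submodule.span (ZMod 2) (f '' (Set.univ : Set (Fin m))) := by
    rw [Set.image_univ, hspan]; trivial
  rw [huniv, Set.image_insert_eq, Submodule.mem_span_insert] at hv_top
  obtain ⟨a, z, hz, hvaz⟩ := hv_top
  have ha : a = 1 := by
    by_contra h
    have hz01 : ∀ b : ZMod 2, b ≠ 1 → b = 0 := by decide
    have : a = 0 := hz01 a h
    rw [this, zero_smul, zero_add] at hvaz
    exact hv (hvaz ▸ hz)
  rw [ha, one_smul] at hvaz
  have h2 : f kstar + f kstar = 0 := by
    funext t
    have : ∀ z : ZMod 2, z + z = 0 := by decide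
    exact this _
  rw [hvaz]
  rw [add_comm (f kstar) z, add_assoc, h2, add_zero]
  exact hz


theorem stmt15 (m : ℕ) (hm : 1 ≤ m) (A B C : Matrix (Fin m) (Fin m) (ZMod 2))
    (hnet : IsNet 0 m 3 (digitalNet m 3 ![A, B, C]))
    (j : ℕ) (hj : j ≤ m - 1) :
    (fun v => C ⟨j, by omega⟩ + v) ''
        ↑(Submodule.span (ZMod 2) (rowSet C j))
      = ⋂ i ∈ Finset.range (m - j), ((Vsub A B C i j : Set (Fin m → ZMod 2))ᶜ) := by
  have master : ∀ d1 d2 d3 : ℕ, d1 + d2 + d3 = m →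
      LinearIndependent (ZMod 2) (fam m d1 d2 A B C) :=
    fun d1 d2 d3 hs => master m A B C hnet d1 d2 d3 hs
  have hjm : j < m := by omega
  have h2z : ∀ z : ZMod 2, z + z = 0 := by decide
  set c : Fin m → ZMod 2 := C ⟨j, by omega⟩ with hc
  -- c is not in any V_{i,j}
  have hc_not : ∀ i, i < m - j → c ∉ Vsub A B C i j := by
    intro i hi
    have hs : i + (m - i - j - 1) + (j + 1) = m := by omega
    have hind := master i (m - i - j - 1) (j + 1) hs
    have hset := famSet m i (m - i - j - 1) (j + 1) i (m - i - j - 1) j A B C hs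
      le_rfl le_rfl (by omega)
    intro hmem
    have hceq : c = fam m i (m - i - j - 1) A B C ⟨m - 1, by omega⟩ := by
      unfold fam
      rw [if_neg (show ¬ m - 1 < i by omega),
        if_neg (show ¬ m - 1 < i + (m - i - j - 1) by omega)]
      apply congrArg
      apply Fin.ext
      show j = m - 1 - i - (m - i - j - 1)
      omega
    have hnotmem : (⟨m - 1, by omega⟩ : Fin m) ∉ sSet m i (m - i - j - 1) i (m - i - j - 1) j := by
      intro hk
      simp only [sSet, Set.mem_setOf_eq] at hk
      omega
    have hnot := hind.notMem_span_image hnotmem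
    rw [hset] at hnot
    rw [hceq] at hmem
    exact hnot hmem
  ext v
  simp only [Set.mem_image, SetLike.mem_coe, Set.mem_iInter, Set.mem_compl_iff,
    Finset.mem_range]
  constructor
  · rintro ⟨u, hu, rfl⟩
    intro i hi hmem
    have huV : u ∈ Vsub A B C i j := by
      apply Submodule.span_mono (Set.subset_union_right) hu
    have hcV : c ∈ Vsub A B C i j := by
      have hadd := Submodule.add_mem _ hmem huV
      have : c + u + u = c := by
        rw [add_assoc]
        have : u + u = 0 := by funext t; exact h2z _
        rw [this, add_zero]
      rwa [this] at hadd
    exact hc_not i hi hcV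
  · intro hv
    -- Step A: v + c lies in every V_{i,j}
    have hA : ∀ i, i < m - j → v + c ∈ Vsub A B C i j := by
      intro i hi
      have hs : i + (m - j - i) + j = m := by omega
      have hind := master i (m - j - i) j hs
      have hspan : Submodule.span (ZMod 2) (Set.range (fam m i (m - j - i) A B C)) = ⊤ := by
        apply hind.span_eq_top_of_card_eq_finrank'
        simp [Module.finrank_fintype_fun_eq_card]
      set s : Set (Fin m) := sSet m i (m - j - i) i (m - j - i - 1) j with hsdef
      have huniv : (Set.univ : Set (Fin m)) = insert ⟨m - j - 1, by omega⟩ s := by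
        ext k
        simp only [Set.mem_univ, Set.mem_insert_iff, hsdef, sSet, Set.mem_setOf_eq, true_iff]
        have hkm := k.isLt
        by_cases hk : k.val = m - j - 1
        · left; exact Fin.ext hk
        · right; omega
      have hset := famSet m i (m - j - i) j i (m - j - i - 1) j A B C hs
        le_rfl (by omega) le_rfl
      have hVeq : Vsub A B C i j = Submodule.span (ZMod 2)
          (fam m i (m - j - i) A B C '' s) := by
        rw [hsdef, hset]
        unfold Vsub
        have : m - i - j - 1 = m - j - i - 1 := by omega
        rw [this]
      have hvnot : v ∉ Submodule.span (ZMod 2) (fam m i (m - j - i) A B C '' s) := by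
        rw [← hVeq]; exact hv i hi
      have hcnot : c ∉ Submodule.span (ZMod 2) (fam m i (m - j - i) A B C '' s) := by
        rw [← hVeq]; exact hc_not i hi
      have h1 := mem_coset _ hind hspan s _ huniv v hvnot
      have h2 := mem_coset _ hind hspan s _ huniv c hcnot
      have hsum2 := Submodule.add_mem _ h1 h2
      set e : Fin m → ZMod 2 := fam m i (m - j - i) A B C ⟨m - j - 1, by omega⟩
      have hee : e + e = 0 := by funext t; exact h2z _
      have hrw : v + e + (c + e) = v + c := by
        rw [show v + e + (c + e) = v + c + (e + e) by ring, hee, add_zero]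
      rw [hrw] at hsum2
      rw [hVeq]
      exact hsum2
    -- Step B: downward induction
    have hB : ∀ i, i ≤ m - j - 1 →
        v + c ∈ Submodule.span (ZMod 2) (rowSet B (m - j - 1 - i) ∪ rowSet C j) := by
      intro i
      induction i with
      | zero =>
        intro _
        have h0 := hA 0 (by omega)
        unfold Vsub at h0
        rw [rowSet_zero, Set.empty_union] at h0
        have : m - 0 - j - 1 = m - j - 1 - 0 := by omega
        rwa [this] at h0
      | succ i ih =>
        intro hi1
        have ihv := ih (by omega)
        have hs : (i + 1) + (m - j - i - 1) + j = m := by omega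
        have hind := master (i + 1) (m - j - i - 1) j hs
        have hset1 := famSet m (i + 1) (m - j - i - 1) j 0 (m - j - i - 1) j A B C hs
          (by omega) le_rfl le_rfl
        have hset2 := famSet m (i + 1) (m - j - i - 1) j (i + 1) (m - j - i - 2) j A B C hs
          le_rfl (by omega) le_rfl
        have h1 : v + c ∈ Submodule.span (ZMod 2)
            (fam m (i + 1) (m - j - i - 1) A B C '' sSet m (i + 1) (m - j - i - 1) 0 (m - j - i - 1) j) := by
          rw [hset1, rowSet_zero, Set.empty_union]
          have : m - j - i - 1 = m - j - 1 - i := by omega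
          rwa [this]
        have h2 : v + c ∈ Submodule.span (ZMod 2)
            (fam m (i + 1) (m - j - i - 1) A B C '' sSet m (i + 1) (m - j - i - 1) (i + 1) (m - j - i - 2) j) := by
          rw [hset2]
          have hAi := hA (i + 1) (by omega)
          unfold Vsub at hAi
          have : m - (i + 1) - j - 1 = m - j - i - 2 := by omega
          rwa [this] at hAi
        have hint := span_inter _ hind _ _ _ h1 h2
        have hinter : sSet m (i + 1) (m - j - i - 1) 0 (m - j - i - 1) j ∩
            sSet m (i + 1) (m - j - i - 1) (i + 1) (m - j - i - 2) j
            = sSet m (i + 1) (m - j - i - 1) 0 (m - j - i - 2) j := by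
          ext k
          simp only [Set.mem_inter_iff, sSet, Set.mem_setOf_eq]
          omega
        rw [hinter] at hint
        have hset3 := famSet m (i + 1) (m - j - i - 1) j 0 (m - j - i - 2) j A B C hs
          (by omega) (by omega) le_rfl
        rw [hset3, rowSet_zero, Set.empty_union] at hint
        have : m - j - i - 2 = m - j - 1 - (i + 1) := by omega
        rwa [this] at hint
    have hw := hB (m - j - 1) le_rfl
    rw [show m - j - 1 - (m - j - 1) = 0 by omega, rowSet_zero, Set.empty_union] at hw
    refine ⟨v + c, hw, ?_⟩
    rw [show c + (v + c) = v + (c + c) by ring]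
    have : c + c = 0 := by funext t; exact h2z _
    rw [this, add_zero]
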